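/- arXiv:2005.04801 — 2 statements merged into one kernel-verified Lean document; each statement's English description precedes it below -/
import Mathlib

section
/- For every natural number n all of whose base-5 digits belong to {0, 2, 4}, A(n) ≡ 23^{e(n)} (mod 25), where e(n) is the number of base-5 digits of n equal to 2 and A denotes the Apéry numbers. -/
open Finset

def apery (n : ℕ) : ℕ := ∑ k ∈ Finset.range (n + 1), (n.choose k)^2 * ((n + k).choose k)^2

abbrev R := ZMod 25

lemma h25 : (25 : R) = 0 := by decide

instance : Fact (Nat.Prime 5) := ⟨by norm_num⟩

lemma five_dvd_choose {n k : ℕ} (h : n % 5 < k % 5) : 5 ∣ n.choose k := by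
  have H := Choose.choose_modEq_choose_mod_mul_choose_div_nat (n := n) (k := k) (p := 5)
  rw [Nat.choose_eq_zero_of_lt h, zero_mul] at H
  exact Nat.modEq_zero_iff_dvd.mp H

lemma sq0 {x : ℕ} (h : 5 ∣ x) : ((x : R))^2 = 0 := by
  obtain ⟨t, rfl⟩ := h
  push_cast
  linear_combination ((t:R)^2) * h25

lemma jac : ∀ a c : ℕ, ((5*a).choose (5*c) : R) = (a.choose c : R) := by
  intro a
  induction a with
  | zero =>
    intro c
    match c with
    | 0 => simp
    | c+1 =>
      rw [Nat.choose_eq_zero_of_lt (by omega), Nat.choose_eq_zero_of_lt (by omega)]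
  | succ a ih =>
    intro c
    match c with
    | 0 => simp
    | c+1 =>
      have V := Nat.add_choose_eq (5*a) 5 (5*(c+1))
      rw [show 5*(a+1) = 5*a+5 by ring, V]
      push_cast
      have m1 : ((5*c+5 : ℕ), (0:ℕ)) ∈ Finset.HasAntidiagonal.antidiagonal (5*(c+1)) := by
        simp [Finset.HasAntidiagonal.mem_antidiagonal]; omega
      rw [← Finset.add_sum_erase _ _ m1]
      have m2 : ((5*c : ℕ), (5:ℕ)) ∈ (Finset.HasAntidiagonal.antidiagonal (5*(c+1))).erase ((5*c+5 : ℕ), (0:ℕ)) := by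
        simp [Finset.HasAntidiagonal.mem_antidiagonal]; omega
      rw [← Finset.add_sum_erase _ _ m2]
      have hz : ∀ ij ∈ ((Finset.HasAntidiagonal.antidiagonal (5*(c+1))).erase ((5*c+5 : ℕ), (0:ℕ))).erase ((5*c : ℕ), (5:ℕ)),
          ((5*a).choose ij.1 : R) * ((5:ℕ).choose ij.2 : R) = 0 := by
        rintro ⟨i, j⟩ hij
        have hne2 := Finset.ne_of_mem_erase hij
        have hij' := Finset.mem_of_mem_erase hij
        have hne1 := Finset.ne_of_mem_erase hij'
        have hmem := Finset.mem_of_mem_erase hij'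
        rw [Finset.HasAntidiagonal.mem_antidiagonal] at hmem
        simp only [Prod.fst, Prod.snd] at hmem ⊢
        rcases Nat.lt_or_ge j 6 with hj | hj
        · rcases Nat.eq_zero_or_pos j with h0 | h0
          · exact absurd (show ((i,j) : ℕ×ℕ) = (5*c+5, 0) by rw [show i = 5*c+5 by omega, h0]) hne1
          · rcases eq_or_ne j 5 with h5 | h5
            · exact absurd (show ((i,j) : ℕ×ℕ) = (5*c, 5) by rw [show i = 5*c by omega, h5]) hne2
            · have d1 : 5 ∣ (5*a).choose i := five_dvd_choose (by omega)
              have d2 : 5 ∣ Nat.choose 5 j := Nat.Prime.dvd_choose_self (by norm_num) (by omega) (by omega)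
              obtain ⟨t, ht⟩ := d1; obtain ⟨u, hu⟩ := d2
              rw [ht, hu]; push_cast
              linear_combination ((t:R)*(u:R)) * h25
        · rw [Nat.choose_eq_zero_of_lt (show (5:ℕ) < j by omega)]; push_cast; ring
      rw [Finset.sum_eq_zero hz]
      dsimp only
      simp only [Nat.choose_zero_right, Nat.choose_self, Nat.cast_one, mul_one, add_zero]
      rw [show 5*c+5 = 5*(c+1) by ring, ih (c+1), ih c, Nat.choose_succ_succ a c]
      push_cast
      ring
lemma X20 (c e : ℕ) : ((5*(c+e)+2).choose (5*c) : R) = (((c+e).choose c : ℕ) : R) * (1+20*(c:R)) := by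
  have hj := jac (c+e) c
  have t1 := Nat.choose_mul_succ_eq (5*(c+e)) (5*c)
  rw [show 5*(c+e)+1-(5*c) = 5*e+1 by omega] at t1
  have t2 := Nat.choose_mul_succ_eq (5*(c+e)+1) (5*c)
  rw [show 5*(c+e)+1+1-(5*c) = 5*e+2 by omega] at t2
  have s1 := congrArg (fun x : ℕ => (x : R)) t1
  push_cast at s1
  have s2 := congrArg (fun x : ℕ => (x : R)) t2
  push_cast at s2
  linear_combination ((-26) + (55*(e:R)) + (350*(e:R)*(e:R)) + (125*(e:R)*(e:R)*(e:R)) + (-65*(c:R)) + (300*(c:R)*(e:R)) + (125*(c:R)*(e:R)*(e:R))) * s1 + ((-13) + (-5*(e:R))) * s2 + ((26) + (75*(e:R)) + (-625*(e:R)*(e:R)) + (-1875*(e:R)*(e:R)*(e:R)) + (-625*(e:R)*(e:R)*(e:R)*(e:R)) + (195*(c:R)) + (-250*(c:R)*(e:R)) + (-3375*(c:R)*(e:R)*(e:R)) + (-1250*(c:R)*(e:R)*(e:R)*(e:R)) + (325*(c:R)*(c:R)) + (-1500*(c:R)*(c:R)*(e:R)) + (-625*(c:R)*(c:R)*(e:R)*(e:R)))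 * hj + (((((c+e).choose c) : R)) + (-1*((5*(c+e)+2).choose (5*c) : R)) + (3*(e:R)*(((c+e).choose c) : R)) + (-3*(e:R)*((5*(c+e)+2).choose (5*c) : R)) + (-25*(e:R)*(e:R)*(((c+e).choose c) : R)) + (-1*(e:R)*(e:R)*((5*(c+e)+2).choose (5*c) : R)) + (26*(e:R)*(e:R)*((5*(c+e)+1).choose (5*c) : R)) + (-75*(e:R)*(e:R)*(e:R)*(((c+e).choose c) : R)) + (75*(e:R)*(e:R)*(e:R)*((5*(c+e)+1).choose (5*c) : R)) + (-25*(e:R)*(e:R)*(e:R)*(e:R)*(((c+e).choose c) : R)) + (25*(e:R)*(e:R)*(e:R)*(e:R)*((5*(c+e)+1).choose (5*c) : R)) + (7*(c:R)*(((c+e).choose c) : R)) + (-10*(c:R)*(e:R)*(((c+e).choose c) : R)) + (-135*(c:R)*(e:R)*(e:R)*(((c+e).choose c) : R)) + (65*(c:R)*(e:R)*(e:R)*((5*(c+e)+1).choose (5*c) : R)) + (-50*(c:R)*(e:R)*(e:R)*(e:R)*(((c+e).choose c) : R)) + (25*(c:R)*(e:R)*(e:R)*(e:R)*((5*(c+e)+1).choose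 (5*c) : R)) + (13*(c:R)*(c:R)*(((c+e).choose c) : R)) + (-60*(c:R)*(c:R)*(e:R)*(((c+e).choose c) : R)) + (-25*(c:R)*(c:R)*(e:R)*(e:R)*(((c+e).choose c) : R))) * h25

lemma X21 (c e : ℕ) : ((5*(c+e)+2).choose (5*c+1) : R) = (((c+e).choose c : ℕ) : R) * (2+5*((c:R)+e)) := by
  have hj := jac (c+e) c
  have t1 := Nat.add_one_mul_choose_eq (5*(c+e)) (5*c)
  have t2 := Nat.choose_mul_succ_eq (5*(c+e)+1) (5*c+1)
  rw [show 5*(c+e)+1+1-(5*c+1) = 5*e+1 by omega] at t2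
  have s1 := congrArg (fun x : ℕ => (x : R)) t1
  push_cast at s1
  have s2 := congrArg (fun x : ℕ => (x : R)) t2
  push_cast at s2
  linear_combination ((-2) + (5*(e:R)) + (25*(e:R)*(e:R)) + (5*(c:R)) + (-125*(c:R)*(e:R)*(e:R)) + (25*(c:R)*(c:R)) + (-125*(c:R)*(c:R)*(e:R))) * s1 + ((-1) + (5*(e:R))) * s2 + ((2) + (5*(e:R)) + (-50*(e:R)*(e:R)) + (-125*(e:R)*(e:R)*(e:R)) + (5*(c:R)) + (-50*(c:R)*(e:R)) + (625*(c:R)*(e:R)*(e:R)*(e:R)) + (-50*(c:R)*(c:R)) + (1250*(c:R)*(c:R)*(e:R)*(e:R)) + (-125*(c:R)*(c:R)*(c:R)) + (625*(c:R)*(c:R)*(c:R)*(e:R))) * hj + ((-2*(e:R)*(e:R)*(((c+e).choose c) : R)) + ((e:R)*(e:R)*((5*(c+e)+2).choose (5*c+1) : R)) + (-5*(e:R)*(e:R)*(e:R)*(((c+e).choose c) : R)) + (-2*(c:R)*(e:R)*(((c+e).choose c) : R)) + (25*(c:R)*(e:R)*(e:R)*(e:R)*(((c+e).choose c) : R)) +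 (-2*(c:R)*(c:R)*(((c+e).choose c) : R)) + (2*(c:R)*(c:R)*((5*(c+e)+1).choose (5*c+1) : R)) + (-5*(c:R)*(c:R)*(e:R)*((5*(c+e)+1).choose (5*c+1) : R)) + (50*(c:R)*(c:R)*(e:R)*(e:R)*(((c+e).choose c) : R)) + (-25*(c:R)*(c:R)*(e:R)*(e:R)*((5*(c+e)+1).choose (5*c+1) : R)) + (-5*(c:R)*(c:R)*(c:R)*(((c+e).choose c) : R)) + (5*(c:R)*(c:R)*(c:R)*((5*(c+e)+1).choose (5*c+1) : R)) + (25*(c:R)*(c:R)*(c:R)*(e:R)*(((c+e).choose c) : R)) + (-25*(c:R)*(c:R)*(c:R)*(e:R)*((5*(c+e)+1).choose (5*c+1) : R))) * h25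

lemma X22 (c e : ℕ) : ((5*(c+e)+2).choose (5*c+2) : R) = (((c+e).choose c : ℕ) : R) * (1+20*(e:R)) := by
  have hj := jac (c+e) c
  have t1 := Nat.add_one_mul_choose_eq (5*(c+e)) (5*c)
  have t2 := Nat.add_one_mul_choose_eq (5*(c+e)+1) (5*c+1)
  have s1 := congrArg (fun x : ℕ => (x : R)) t1
  push_cast at s1
  have s2 := congrArg (fun x : ℕ => (x : R)) t2
  push_cast at s2
  linear_combination ((-26) + (-65*(e:R)) + (55*(c:R)) + (300*(c:R)*(e:R)) + (350*(c:R)*(c:R)) + (125*(c:R)*(c:R)*(e:R)) + (125*(c:R)*(c:R)*(c:R))) * s1 + ((-13) + (-5*(c:R))) * s2 + ((26) + (195*(e:R)) + (325*(e:R)*(e:R)) + (75*(c:R)) + (-250*(c:R)*(e:R)) + (-1500*(c:R)*(e:R)*(e:R)) + (-625*(c:R)*(c:R)) + (-3375*(c:R)*(c:R)*(e:R)) + (-625*(c:R)*(c:R)*(e:R)*(e:R)) + (-1875*(c:R)*(c:R)*(c:R)) + (-1250*(c:R)*(c:R)*(c:R)*(e:R)) + (-625*(c:R)*(c:R)*(c:R)*(c:R)))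 * hj + (((((c+e).choose c) : R)) + (-1*((5*(c+e)+2).choose (5*c+2) : R)) + (7*(e:R)*(((c+e).choose c) : R)) + (13*(e:R)*(e:R)*(((c+e).choose c) : R)) + (3*(c:R)*(((c+e).choose c) : R)) + (-3*(c:R)*((5*(c+e)+2).choose (5*c+2) : R)) + (-10*(c:R)*(e:R)*(((c+e).choose c) : R)) + (-60*(c:R)*(e:R)*(e:R)*(((c+e).choose c) : R)) + (-25*(c:R)*(c:R)*(((c+e).choose c) : R)) + (-1*(c:R)*(c:R)*((5*(c+e)+2).choose (5*c+2) : R)) + (26*(c:R)*(c:R)*((5*(c+e)+1).choose (5*c+1) : R)) + (-135*(c:R)*(c:R)*(e:R)*(((c+e).choose c) : R)) + (65*(c:R)*(c:R)*(e:R)*((5*(c+e)+1).choose (5*c+1) : R)) + (-25*(c:R)*(c:R)*(e:R)*(e:R)*(((c+e).choose c) : R)) + (-75*(c:R)*(c:R)*(c:R)*(((c+e).choose c) : R)) + (75*(c:R)*(c:R)*(c:R)*((5*(c+e)+1).choose (5*c+1) : R)) + (-50*(c:R)*(c:R)*(c:R)*(e:R)*(((c+e).choose c) : R)) + (25*(c:R)*(c:R)*(c:R)*(e:R)*((5*(c+e)+1).choose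 (5*c+1) : R)) + (-25*(c:R)*(c:R)*(c:R)*(c:R)*(((c+e).choose c) : R)) + (25*(c:R)*(c:R)*(c:R)*(c:R)*((5*(c+e)+1).choose (5*c+1) : R))) * h25

lemma X31 (c e : ℕ) : ((5*(c+e)+3).choose (5*c+1) : R) = (((c+e).choose c : ℕ) : R) * (3+5*(e:R)) := by
  have hj := jac (c+e) c
  have t1 := Nat.add_one_mul_choose_eq (5*(c+e)) (5*c)
  have t2 := Nat.choose_mul_succ_eq (5*(c+e)+1) (5*c+1)
  rw [show 5*(c+e)+1+1-(5*c+1) = 5*e+1 by omega] at t2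
  have t3 := Nat.choose_mul_succ_eq (5*(c+e)+2) (5*c+1)
  rw [show 5*(c+e)+2+1-(5*c+1) = 5*e+2 by omega] at t3
  have s1 := congrArg (fun x : ℕ => (x : R)) t1
  push_cast at s1
  have s2 := congrArg (fun x : ℕ => (x : R)) t2
  push_cast at s2
  have s3 := congrArg (fun x : ℕ => (x : R)) t3
  push_cast at s3
  linear_combination ((-78) + (35*(e:R)) + (1325*(e:R)*(e:R)) + (2125*(e:R)*(e:R)*(e:R)) + (625*(e:R)*(e:R)*(e:R)*(e:R)) + (65*(c:R)) + (675*(c:R)*(e:R)) + (-3000*(c:R)*(e:R)*(e:R)) + (-9375*(c:R)*(e:R)*(e:R)*(e:R)) + (-3125*(c:R)*(e:R)*(e:R)*(e:R)*(e:R)) + (1300*(c:R)*(c:R)) + (-2750*(c:R)*(c:R)*(e:R)) + (-17500*(c:R)*(c:R)*(e:R)*(e:R)) + (-6250*(c:R)*(c:R)*(e:R)*(e:R)*(e:R)) + (1625*(c:R)*(c:R)*(c:R)) + (-7500*(c:R)*(c:R)*(c:R)*(e:R)) + (-3125*(c:R)*(c:R)*(c:R)*(e:R)*(e:R))) * s1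 + ((-39) + (115*(e:R)) + (375*(e:R)*(e:R)) + (125*(e:R)*(e:R)*(e:R)) + (-65*(c:R)) + (300*(c:R)*(e:R)) + (125*(c:R)*(e:R)*(e:R))) * s2 + ((-13) + (-5*(e:R))) * s3 + ((78) + (355*(e:R)) + (-1500*(e:R)*(e:R)) + (-8750*(e:R)*(e:R)*(e:R)) + (-11250*(e:R)*(e:R)*(e:R)*(e:R)) + (-3125*(e:R)*(e:R)*(e:R)*(e:R)*(e:R)) + (325*(c:R)) + (-1175*(c:R)*(e:R)) + (-7000*(c:R)*(e:R)*(e:R)) + (13750*(c:R)*(e:R)*(e:R)*(e:R)) + (46875*(c:R)*(e:R)*(e:R)*(e:R)*(e:R)) + (15625*(c:R)*(e:R)*(e:R)*(e:R)*(e:R)*(e:R)) + (-1625*(c:R)*(c:R)) + (-7125*(c:R)*(c:R)*(e:R)) + (46250*(c:R)*(c:R)*(e:R)*(e:R)) + (140625*(c:R)*(c:R)*(e:R)*(e:R)*(e:R)) + (46875*(c:R)*(c:R)*(e:R)*(e:R)*(e:R)*(e:R)) + (-8125*(c:R)*(c:R)*(c:R)) + (13125*(c:R)*(c:R)*(c:R)*(e:R))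 + (128125*(c:R)*(c:R)*(c:R)*(e:R)*(e:R)) + (46875*(c:R)*(c:R)*(c:R)*(e:R)*(e:R)*(e:R)) + (-8125*(c:R)*(c:R)*(c:R)*(c:R)) + (37500*(c:R)*(c:R)*(c:R)*(c:R)*(e:R)) + (15625*(c:R)*(c:R)*(c:R)*(c:R)*(e:R)*(e:R))) * hj + ((3*(((c+e).choose c) : R)) + (-1*((5*(c+e)+3).choose (5*c+1) : R)) + (14*(e:R)*(((c+e).choose c) : R)) + (-3*(e:R)*((5*(c+e)+3).choose (5*c+1) : R)) + (-60*(e:R)*(e:R)*(((c+e).choose c) : R)) + (-1*(e:R)*(e:R)*((5*(c+e)+3).choose (5*c+1) : R)) + (39*(e:R)*(e:R)*((5*(c+e)+2).choose (5*c+1) : R)) + (-350*(e:R)*(e:R)*(e:R)*(((c+e).choose c) : R)) + (80*(e:R)*(e:R)*(e:R)*((5*(c+e)+2).choose (5*c+1) : R)) + (-450*(e:R)*(e:R)*(e:R)*(e:R)*(((c+e).choose c) : R)) + (25*(e:R)*(e:R)*(e:R)*(e:R)*((5*(c+e)+2).choose (5*c+1) : R)) + (-125*(e:R)*(e:R)*(e:R)*(e:R)*(e:R)*(((c+e).choose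 c) : R)) + (13*(c:R)*(((c+e).choose c) : R)) + (-47*(c:R)*(e:R)*(((c+e).choose c) : R)) + (-280*(c:R)*(e:R)*(e:R)*(((c+e).choose c) : R)) + (65*(c:R)*(e:R)*(e:R)*((5*(c+e)+2).choose (5*c+1) : R)) + (550*(c:R)*(e:R)*(e:R)*(e:R)*(((c+e).choose c) : R)) + (25*(c:R)*(e:R)*(e:R)*(e:R)*((5*(c+e)+2).choose (5*c+1) : R)) + (1875*(c:R)*(e:R)*(e:R)*(e:R)*(e:R)*(((c+e).choose c) : R)) + (625*(c:R)*(e:R)*(e:R)*(e:R)*(e:R)*(e:R)*(((c+e).choose c) : R)) + (-65*(c:R)*(c:R)*(((c+e).choose c) : R)) + (78*(c:R)*(c:R)*((5*(c+e)+1).choose (5*c+1) : R)) + (-285*(c:R)*(c:R)*(e:R)*(((c+e).choose c) : R)) + (-35*(c:R)*(c:R)*(e:R)*((5*(c+e)+1).choose (5*c+1) : R)) + (1850*(c:R)*(c:R)*(e:R)*(e:R)*(((c+e).choose c) : R)) + (-1325*(c:R)*(c:R)*(e:R)*(e:R)*((5*(c+e)+1).choose (5*c+1) : R)) + (5625*(c:R)*(c:R)*(e:R)*(e:R)*(e:R)*(((c+e).choose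 c) : R)) + (-2125*(c:R)*(c:R)*(e:R)*(e:R)*(e:R)*((5*(c+e)+1).choose (5*c+1) : R)) + (1875*(c:R)*(c:R)*(e:R)*(e:R)*(e:R)*(e:R)*(((c+e).choose c) : R)) + (-625*(c:R)*(c:R)*(e:R)*(e:R)*(e:R)*(e:R)*((5*(c+e)+1).choose (5*c+1) : R)) + (-325*(c:R)*(c:R)*(c:R)*(((c+e).choose c) : R)) + (325*(c:R)*(c:R)*(c:R)*((5*(c+e)+1).choose (5*c+1) : R)) + (525*(c:R)*(c:R)*(c:R)*(e:R)*(((c+e).choose c) : R)) + (-850*(c:R)*(c:R)*(c:R)*(e:R)*((5*(c+e)+1).choose (5*c+1) : R)) + (5125*(c:R)*(c:R)*(c:R)*(e:R)*(e:R)*(((c+e).choose c) : R)) + (-3625*(c:R)*(c:R)*(c:R)*(e:R)*(e:R)*((5*(c+e)+1).choose (5*c+1) : R)) + (1875*(c:R)*(c:R)*(c:R)*(e:R)*(e:R)*(e:R)*(((c+e).choose c) : R)) + (-1250*(c:R)*(c:R)*(c:R)*(e:R)*(e:R)*(e:R)*((5*(c+e)+1).choose (5*c+1) : R)) + (-325*(c:R)*(c:R)*(c:R)*(c:R)*(((c+e).choose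 c) : R)) + (325*(c:R)*(c:R)*(c:R)*(c:R)*((5*(c+e)+1).choose (5*c+1) : R)) + (1500*(c:R)*(c:R)*(c:R)*(c:R)*(e:R)*(((c+e).choose c) : R)) + (-1500*(c:R)*(c:R)*(c:R)*(c:R)*(e:R)*((5*(c+e)+1).choose (5*c+1) : R)) + (625*(c:R)*(c:R)*(c:R)*(c:R)*(e:R)*(e:R)*(((c+e).choose c) : R)) + (-625*(c:R)*(c:R)*(c:R)*(c:R)*(e:R)*(e:R)*((5*(c+e)+1).choose (5*c+1) : R))) * h25

lemma X40 (c e : ℕ) : ((5*(c+e)+4).choose (5*c) : R) = (((c+e).choose c : ℕ) : R) * (1) := by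
  have hj := jac (c+e) c
  have t1 := Nat.choose_mul_succ_eq (5*(c+e)) (5*c)
  rw [show 5*(c+e)+1-(5*c) = 5*e+1 by omega] at t1
  have t2 := Nat.choose_mul_succ_eq (5*(c+e)+1) (5*c)
  rw [show 5*(c+e)+1+1-(5*c) = 5*e+2 by omega] at t2
  have t3 := Nat.choose_mul_succ_eq (5*(c+e)+2) (5*c)
  rw [show 5*(c+e)+2+1-(5*c) = 5*e+3 by omega] at t3
  have t4 := Nat.choose_mul_succ_eq (5*(c+e)+3) (5*c)
  rw [show 5*(c+e)+3+1-(5*c) = 5*e+4 by omega] at t4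
  have s1 := congrArg (fun x : ℕ => (x : R)) t1
  push_cast at s1
  have s2 := congrArg (fun x : ℕ => (x : R)) t2
  push_cast at s2
  have s3 := congrArg (fun x : ℕ => (x : R)) t3
  push_cast at s3
  have s4 := congrArg (fun x : ℕ => (x : R)) t4
  push_cast at s4
  linear_combination ((-100776) + (-216470*(e:R)) + (1628475*(e:R)*(e:R)) + (7242000*(e:R)*(e:R)*(e:R)) + (11366250*(e:R)*(e:R)*(e:R)*(e:R)) + (8231250*(e:R)*(e:R)*(e:R)*(e:R)*(e:R)) + (2671875*(e:R)*(e:R)*(e:R)*(e:R)*(e:R)*(e:R)) + (312500*(e:R)*(e:R)*(e:R)*(e:R)*(e:R)*(e:R)*(e:R)) + (-545870*(c:R)) + (-105300*(c:R)*(e:R)) + (8875375*(c:R)*(e:R)*(e:R)) + (22134375*(c:R)*(e:R)*(e:R)*(e:R)) + (20246875*(c:R)*(e:R)*(e:R)*(e:R)*(e:R)) + (7453125*(c:R)*(e:R)*(e:R)*(e:R)*(e:R)*(e:R)) + (937500*(c:R)*(e:R)*(e:R)*(e:R)*(e:R)*(e:R)*(e:R)) + (-944775*(c:R)*(c:R))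 + (1513500*(c:R)*(c:R)*(e:R)) + (12543750*(c:R)*(c:R)*(e:R)*(e:R)) + (16125000*(c:R)*(c:R)*(e:R)*(e:R)*(e:R)) + (6890625*(c:R)*(c:R)*(e:R)*(e:R)*(e:R)*(e:R)) + (937500*(c:R)*(c:R)*(e:R)*(e:R)*(e:R)*(e:R)*(e:R)) + (-524875*(c:R)*(c:R)*(c:R)) + (1715625*(c:R)*(c:R)*(c:R)*(e:R)) + (4109375*(c:R)*(c:R)*(c:R)*(e:R)*(e:R)) + (2109375*(c:R)*(c:R)*(c:R)*(e:R)*(e:R)*(e:R)) + (312500*(c:R)*(c:R)*(c:R)*(e:R)*(e:R)*(e:R)*(e:R))) * s1 + ((-50388) + (-234205*(e:R)) + (-401125*(e:R)*(e:R)) + (-309375*(e:R)*(e:R)*(e:R)) + (-104375*(e:R)*(e:R)*(e:R)*(e:R)) + (-12500*(e:R)*(e:R)*(e:R)*(e:R)*(e:R)) + (-146965*(c:R)) + (-464400*(c:R)*(e:R)) + (-485125*(c:R)*(e:R)*(e:R)) + (-191250*(c:R)*(e:R)*(e:R)*(e:R)) + (-25000*(c:R)*(e:R)*(e:R)*(e:R)*(e:R))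 + (-104975*(c:R)*(c:R)) + (-181750*(c:R)*(c:R)*(e:R)) + (-86875*(c:R)*(c:R)*(e:R)*(e:R)) + (-12500*(c:R)*(c:R)*(e:R)*(e:R)*(e:R))) * s2 + ((-1292) + (-3355*(e:R)) + (-2575*(e:R)*(e:R)) + (-500*(e:R)*(e:R)*(e:R)) + (-1615*(c:R)) + (-2175*(c:R)*(e:R)) + (-500*(c:R)*(e:R)*(e:R))) * s3 + ((-19) + (-20*(e:R))) * s4 + ((100776) + (720350*(e:R)) + (-546125*(e:R)*(e:R)) + (-15384375*(e:R)*(e:R)*(e:R)) + (-47576250*(e:R)*(e:R)*(e:R)*(e:R)) + (-65062500*(e:R)*(e:R)*(e:R)*(e:R)*(e:R)) + (-43828125*(e:R)*(e:R)*(e:R)*(e:R)*(e:R)*(e:R)) + (-13671875*(e:R)*(e:R)*(e:R)*(e:R)*(e:R)*(e:R)*(e:R)) + (-1562500*(e:R)*(e:R)*(e:R)*(e:R)*(e:R)*(e:R)*(e:R)*(e:R)) + (1049750*(c:R)) + (3917000*(c:R)*(e:R)) + (-16491250*(c:R)*(e:R)*(e:R)) + (-102721250*(c:R)*(e:R)*(e:R)*(e:R))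 + (-187750000*(c:R)*(e:R)*(e:R)*(e:R)*(e:R)) + (-149843750*(c:R)*(e:R)*(e:R)*(e:R)*(e:R)*(e:R)) + (-51562500*(c:R)*(e:R)*(e:R)*(e:R)*(e:R)*(e:R)*(e:R)) + (-6250000*(c:R)*(e:R)*(e:R)*(e:R)*(e:R)*(e:R)*(e:R)*(e:R)) + (3674125*(c:R)*(c:R)) + (3736875*(c:R)*(c:R)*(e:R)) + (-64488125*(c:R)*(c:R)*(e:R)*(e:R)) + (-189515625*(c:R)*(c:R)*(e:R)*(e:R)*(e:R)) + (-188750000*(c:R)*(c:R)*(e:R)*(e:R)*(e:R)*(e:R)) + (-72656250*(c:R)*(c:R)*(e:R)*(e:R)*(e:R)*(e:R)*(e:R)) + (-9375000*(c:R)*(c:R)*(e:R)*(e:R)*(e:R)*(e:R)*(e:R)*(e:R)) + (5248750*(c:R)*(c:R)*(c:R)) + (-6658750*(c:R)*(c:R)*(c:R)*(e:R)) + (-75406250*(c:R)*(c:R)*(c:R)*(e:R)*(e:R)) + (-103281250*(c:R)*(c:R)*(c:R)*(e:R)*(e:R)*(e:R)) + (-45312500*(c:R)*(c:R)*(c:R)*(e:R)*(e:R)*(e:R)*(e:R))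 + (-6250000*(c:R)*(c:R)*(c:R)*(e:R)*(e:R)*(e:R)*(e:R)*(e:R)) + (2624375*(c:R)*(c:R)*(c:R)*(c:R)) + (-8578125*(c:R)*(c:R)*(c:R)*(c:R)*(e:R)) + (-20546875*(c:R)*(c:R)*(c:R)*(c:R)*(e:R)*(e:R)) + (-10546875*(c:R)*(c:R)*(c:R)*(c:R)*(e:R)*(e:R)*(e:R)) + (-1562500*(c:R)*(c:R)*(c:R)*(c:R)*(e:R)*(e:R)*(e:R)*(e:R))) * hj + ((4031*(((c+e).choose c) : R)) + (-3*((5*(c+e)+4).choose (5*c) : R)) + (-152*((5*(c+e)+3).choose (5*c) : R)) + (-3876*((5*(c+e)+2).choose (5*c) : R)) + (28814*(e:R)*(((c+e).choose c) : R)) + (-7*(e:R)*((5*(c+e)+4).choose (5*c) : R)) + (-654*(e:R)*((5*(c+e)+3).choose (5*c) : R)) + (-28153*(e:R)*((5*(c+e)+2).choose (5*c) : R)) + (-21845*(e:R)*(e:R)*(((c+e).choose c) : R)) + (-4*(e:R)*(e:R)*((5*(c+e)+4).choose (5*c) : R)) + (-976*(e:R)*(e:R)*((5*(c+e)+3).choose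 (5*c) : R)) + (-77951*(e:R)*(e:R)*((5*(c+e)+2).choose (5*c) : R)) + (100776*(e:R)*(e:R)*((5*(c+e)+1).choose (5*c) : R)) + (-615375*(e:R)*(e:R)*(e:R)*(((c+e).choose c) : R)) + (-575*(e:R)*(e:R)*(e:R)*((5*(c+e)+3).choose (5*c) : R)) + (-104400*(e:R)*(e:R)*(e:R)*((5*(c+e)+2).choose (5*c) : R)) + (720350*(e:R)*(e:R)*(e:R)*((5*(c+e)+1).choose (5*c) : R)) + (-1903050*(e:R)*(e:R)*(e:R)*(e:R)*(((c+e).choose c) : R)) + (-100*(e:R)*(e:R)*(e:R)*(e:R)*((5*(c+e)+3).choose (5*c) : R)) + (-70125*(e:R)*(e:R)*(e:R)*(e:R)*((5*(c+e)+2).choose (5*c) : R)) + (1973275*(e:R)*(e:R)*(e:R)*(e:R)*((5*(c+e)+1).choose (5*c) : R)) + (-2602500*(e:R)*(e:R)*(e:R)*(e:R)*(e:R)*(((c+e).choose c) : R)) + (-21875*(e:R)*(e:R)*(e:R)*(e:R)*(e:R)*((5*(c+e)+2).choose (5*c) : R)) + (2624375*(e:R)*(e:R)*(e:R)*(e:R)*(e:R)*((5*(c+e)+1).choose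 (5*c) : R)) + (-1753125*(e:R)*(e:R)*(e:R)*(e:R)*(e:R)*(e:R)*(((c+e).choose c) : R)) + (-2500*(e:R)*(e:R)*(e:R)*(e:R)*(e:R)*(e:R)*((5*(c+e)+2).choose (5*c) : R)) + (1755625*(e:R)*(e:R)*(e:R)*(e:R)*(e:R)*(e:R)*((5*(c+e)+1).choose (5*c) : R)) + (-546875*(e:R)*(e:R)*(e:R)*(e:R)*(e:R)*(e:R)*(e:R)*(((c+e).choose c) : R)) + (546875*(e:R)*(e:R)*(e:R)*(e:R)*(e:R)*(e:R)*(e:R)*((5*(c+e)+1).choose (5*c) : R)) + (-62500*(e:R)*(e:R)*(e:R)*(e:R)*(e:R)*(e:R)*(e:R)*(e:R)*(((c+e).choose c) : R)) + (62500*(e:R)*(e:R)*(e:R)*(e:R)*(e:R)*(e:R)*(e:R)*(e:R)*((5*(c+e)+1).choose (5*c) : R)) + (41990*(c:R)*(((c+e).choose c) : R)) + (-190*(c:R)*((5*(c+e)+3).choose (5*c) : R)) + (-11305*(c:R)*((5*(c+e)+2).choose (5*c) : R)) + (156680*(c:R)*(e:R)*(((c+e).choose c) : R)) + (-580*(c:R)*(e:R)*((5*(c+e)+3).choose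 (5*c) : R)) + (-65290*(c:R)*(e:R)*((5*(c+e)+2).choose (5*c) : R)) + (-659650*(c:R)*(e:R)*(e:R)*(((c+e).choose c) : R)) + (-495*(c:R)*(e:R)*(e:R)*((5*(c+e)+3).choose (5*c) : R)) + (-130680*(c:R)*(e:R)*(e:R)*((5*(c+e)+2).choose (5*c) : R)) + (545870*(c:R)*(e:R)*(e:R)*((5*(c+e)+1).choose (5*c) : R)) + (-4108850*(c:R)*(e:R)*(e:R)*(e:R)*(((c+e).choose c) : R)) + (-100*(c:R)*(e:R)*(e:R)*(e:R)*((5*(c+e)+3).choose (5*c) : R)) + (-112125*(c:R)*(e:R)*(e:R)*(e:R)*((5*(c+e)+2).choose (5*c) : R)) + (2834650*(c:R)*(e:R)*(e:R)*(e:R)*((5*(c+e)+1).choose (5*c) : R)) + (-7510000*(c:R)*(e:R)*(e:R)*(e:R)*(e:R)*(((c+e).choose c) : R)) + (-40250*(c:R)*(e:R)*(e:R)*(e:R)*(e:R)*((5*(c+e)+2).choose (5*c) : R)) + (5297875*(c:R)*(e:R)*(e:R)*(e:R)*(e:R)*((5*(c+e)+1).choose (5*c) : R)) + (-5993750*(c:R)*(e:R)*(e:R)*(e:R)*(e:R)*(e:R)*(((c+e).choose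 c) : R)) + (-5000*(c:R)*(e:R)*(e:R)*(e:R)*(e:R)*(e:R)*((5*(c+e)+2).choose (5*c) : R)) + (4355000*(c:R)*(e:R)*(e:R)*(e:R)*(e:R)*(e:R)*((5*(c+e)+1).choose (5*c) : R)) + (-2062500*(c:R)*(e:R)*(e:R)*(e:R)*(e:R)*(e:R)*(e:R)*(((c+e).choose c) : R)) + (1528125*(c:R)*(e:R)*(e:R)*(e:R)*(e:R)*(e:R)*(e:R)*((5*(c+e)+1).choose (5*c) : R)) + (-250000*(c:R)*(e:R)*(e:R)*(e:R)*(e:R)*(e:R)*(e:R)*(e:R)*(((c+e).choose c) : R)) + (187500*(c:R)*(e:R)*(e:R)*(e:R)*(e:R)*(e:R)*(e:R)*(e:R)*((5*(c+e)+1).choose (5*c) : R)) + (146965*(c:R)*(c:R)*(((c+e).choose c) : R)) + (-8075*(c:R)*(c:R)*((5*(c+e)+2).choose (5*c) : R)) + (149475*(c:R)*(c:R)*(e:R)*(((c+e).choose c) : R)) + (-35100*(c:R)*(c:R)*(e:R)*((5*(c+e)+2).choose (5*c) : R)) + (-2579525*(c:R)*(c:R)*(e:R)*(e:R)*(((c+e).choose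 c) : R)) + (-43200*(c:R)*(c:R)*(e:R)*(e:R)*((5*(c+e)+2).choose (5*c) : R)) + (944775*(c:R)*(c:R)*(e:R)*(e:R)*((5*(c+e)+1).choose (5*c) : R)) + (-7580625*(c:R)*(c:R)*(e:R)*(e:R)*(e:R)*(((c+e).choose c) : R)) + (-18375*(c:R)*(c:R)*(e:R)*(e:R)*(e:R)*((5*(c+e)+2).choose (5*c) : R)) + (3210375*(c:R)*(c:R)*(e:R)*(e:R)*(e:R)*((5*(c+e)+1).choose (5*c) : R)) + (-7550000*(c:R)*(c:R)*(e:R)*(e:R)*(e:R)*(e:R)*(((c+e).choose c) : R)) + (-2500*(c:R)*(c:R)*(e:R)*(e:R)*(e:R)*(e:R)*((5*(c+e)+2).choose (5*c) : R)) + (3508125*(c:R)*(c:R)*(e:R)*(e:R)*(e:R)*(e:R)*((5*(c+e)+1).choose (5*c) : R)) + (-2906250*(c:R)*(c:R)*(e:R)*(e:R)*(e:R)*(e:R)*(e:R)*(((c+e).choose c) : R)) + (1415625*(c:R)*(c:R)*(e:R)*(e:R)*(e:R)*(e:R)*(e:R)*((5*(c+e)+1).choose (5*c) : R)) + (-375000*(c:R)*(c:R)*(e:R)*(e:R)*(e:R)*(e:R)*(e:R)*(e:R)*(((c+e).choose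 c) : R)) + (187500*(c:R)*(c:R)*(e:R)*(e:R)*(e:R)*(e:R)*(e:R)*(e:R)*((5*(c+e)+1).choose (5*c) : R)) + (209950*(c:R)*(c:R)*(c:R)*(((c+e).choose c) : R)) + (-266350*(c:R)*(c:R)*(c:R)*(e:R)*(((c+e).choose c) : R)) + (-3016250*(c:R)*(c:R)*(c:R)*(e:R)*(e:R)*(((c+e).choose c) : R)) + (524875*(c:R)*(c:R)*(c:R)*(e:R)*(e:R)*((5*(c+e)+1).choose (5*c) : R)) + (-4131250*(c:R)*(c:R)*(c:R)*(e:R)*(e:R)*(e:R)*(((c+e).choose c) : R)) + (908750*(c:R)*(c:R)*(c:R)*(e:R)*(e:R)*(e:R)*((5*(c+e)+1).choose (5*c) : R)) + (-1812500*(c:R)*(c:R)*(c:R)*(e:R)*(e:R)*(e:R)*(e:R)*(((c+e).choose c) : R)) + (434375*(c:R)*(c:R)*(c:R)*(e:R)*(e:R)*(e:R)*(e:R)*((5*(c+e)+1).choose (5*c) : R)) + (-250000*(c:R)*(c:R)*(c:R)*(e:R)*(e:R)*(e:R)*(e:R)*(e:R)*(((c+e).choose c) : R)) + (62500*(c:R)*(c:R)*(c:R)*(e:R)*(e:R)*(e:R)*(e:R)*(e:R)*((5*(c+e)+1).choose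 (5*c) : R)) + (104975*(c:R)*(c:R)*(c:R)*(c:R)*(((c+e).choose c) : R)) + (-343125*(c:R)*(c:R)*(c:R)*(c:R)*(e:R)*(((c+e).choose c) : R)) + (-821875*(c:R)*(c:R)*(c:R)*(c:R)*(e:R)*(e:R)*(((c+e).choose c) : R)) + (-421875*(c:R)*(c:R)*(c:R)*(c:R)*(e:R)*(e:R)*(e:R)*(((c+e).choose c) : R)) + (-62500*(c:R)*(c:R)*(c:R)*(c:R)*(e:R)*(e:R)*(e:R)*(e:R)*(((c+e).choose c) : R))) * h25

lemma X42 (c e : ℕ) : ((5*(c+e)+4).choose (5*c+2) : R) = (((c+e).choose c : ℕ) : R) * (6+5*((c:R)+e)) := by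
  have hj := jac (c+e) c
  have t1 := Nat.add_one_mul_choose_eq (5*(c+e)) (5*c)
  have t2 := Nat.add_one_mul_choose_eq (5*(c+e)+1) (5*c+1)
  have t3 := Nat.choose_mul_succ_eq (5*(c+e)+2) (5*c+2)
  rw [show 5*(c+e)+2+1-(5*c+2) = 5*e+1 by omega] at t3
  have t4 := Nat.choose_mul_succ_eq (5*(c+e)+3) (5*c+2)
  rw [show 5*(c+e)+3+1-(5*c+2) = 5*e+2 by omega] at t4
  have s1 := congrArg (fun x : ℕ => (x : R)) t1
  push_cast at s1
  have s2 := congrArg (fun x : ℕ => (x : R)) t2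
  push_cast at s2
  have s3 := congrArg (fun x : ℕ => (x : R)) t3
  push_cast at s3
  have s4 := congrArg (fun x : ℕ => (x : R)) t4
  push_cast at s4
  linear_combination ((-4056) + (-3250*(e:R)) + (71175*(e:R)*(e:R)) + (196625*(e:R)*(e:R)*(e:R)) + (170625*(e:R)*(e:R)*(e:R)*(e:R)) + (40625*(e:R)*(e:R)*(e:R)*(e:R)*(e:R)) + (-3250*(c:R)) + (40350*(c:R)*(e:R)) + (1375*(c:R)*(e:R)*(e:R)) + (-468750*(c:R)*(e:R)*(e:R)*(e:R)) + (-665625*(c:R)*(e:R)*(e:R)*(e:R)*(e:R)) + (-187500*(c:R)*(e:R)*(e:R)*(e:R)*(e:R)*(e:R)) + (71175*(c:R)*(c:R)) + (1375*(c:R)*(c:R)*(e:R)) + (-1293750*(c:R)*(c:R)*(e:R)*(e:R)) + (-2281250*(c:R)*(c:R)*(e:R)*(e:R)*(e:R)) + (-890625*(c:R)*(c:R)*(e:R)*(e:R)*(e:R)*(e:R)) + (-78125*(c:R)*(c:R)*(e:R)*(e:R)*(e:R)*(e:R)*(e:R)) + (196625*(c:R)*(c:R)*(c:R)) + (-468750*(c:R)*(c:R)*(c:R)*(e:R))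 + (-2281250*(c:R)*(c:R)*(c:R)*(e:R)*(e:R)) + (-1406250*(c:R)*(c:R)*(c:R)*(e:R)*(e:R)*(e:R)) + (-234375*(c:R)*(c:R)*(c:R)*(e:R)*(e:R)*(e:R)*(e:R)) + (170625*(c:R)*(c:R)*(c:R)*(c:R)) + (-665625*(c:R)*(c:R)*(c:R)*(c:R)*(e:R)) + (-890625*(c:R)*(c:R)*(c:R)*(c:R)*(e:R)*(e:R)) + (-234375*(c:R)*(c:R)*(c:R)*(c:R)*(e:R)*(e:R)*(e:R)) + (40625*(c:R)*(c:R)*(c:R)*(c:R)*(c:R)) + (-187500*(c:R)*(c:R)*(c:R)*(c:R)*(c:R)*(e:R)) + (-78125*(c:R)*(c:R)*(c:R)*(c:R)*(c:R)*(e:R)*(e:R))) * s1 + ((-2028) + (3445*(e:R)) + (26975*(e:R)*(e:R)) + (30875*(e:R)*(e:R)*(e:R)) + (8125*(e:R)*(e:R)*(e:R)*(e:R)) + (-6695*(c:R)) + (20175*(c:R)*(e:R)) + (60750*(c:R)*(e:R)*(e:R)) + (28125*(c:R)*(e:R)*(e:R)*(e:R)) + (3125*(c:R)*(e:R)*(e:R)*(e:R)*(e:R))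 + (-6500*(c:R)*(c:R)) + (26750*(c:R)*(c:R)*(e:R)) + (27500*(c:R)*(c:R)*(e:R)*(e:R)) + (6250*(c:R)*(c:R)*(e:R)*(e:R)*(e:R)) + (-1625*(c:R)*(c:R)*(c:R)) + (7500*(c:R)*(c:R)*(c:R)*(e:R)) + (3125*(c:R)*(c:R)*(c:R)*(e:R)*(e:R))) * s2 + ((-52) + (175*(e:R)) + (400*(e:R)*(e:R)) + (125*(e:R)*(e:R)*(e:R)) + (-65*(c:R)) + (300*(c:R)*(e:R)) + (125*(c:R)*(e:R)*(e:R))) * s3 + ((-13) + (-5*(e:R))) * s4 + ((4056) + (23530*(e:R)) + (-54925*(e:R)*(e:R)) + (-552500*(e:R)*(e:R)*(e:R)) + (-1153750*(e:R)*(e:R)*(e:R)*(e:R)) + (-893750*(e:R)*(e:R)*(e:R)*(e:R)*(e:R)) + (-203125*(e:R)*(e:R)*(e:R)*(e:R)*(e:R)*(e:R)) + (23530*(c:R)) + (-7850*(c:R)*(e:R)) + (-559000*(c:R)*(e:R)*(e:R)) + (-521250*(c:R)*(e:R)*(e:R)*(e:R)) + (2156250*(c:R)*(e:R)*(e:R)*(e:R)*(e:R))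 + (3312500*(c:R)*(e:R)*(e:R)*(e:R)*(e:R)*(e:R)) + (937500*(c:R)*(e:R)*(e:R)*(e:R)*(e:R)*(e:R)*(e:R)) + (-54925*(c:R)*(c:R)) + (-559000*(c:R)*(c:R)*(e:R)) + (1280000*(c:R)*(c:R)*(e:R)*(e:R)) + (11093750*(c:R)*(c:R)*(e:R)*(e:R)*(e:R)) + (15625000*(c:R)*(c:R)*(e:R)*(e:R)*(e:R)*(e:R)) + (5468750*(c:R)*(c:R)*(e:R)*(e:R)*(e:R)*(e:R)*(e:R)) + (390625*(c:R)*(c:R)*(e:R)*(e:R)*(e:R)*(e:R)*(e:R)*(e:R)) + (-552500*(c:R)*(c:R)*(c:R)) + (-521250*(c:R)*(c:R)*(c:R)*(e:R)) + (11093750*(c:R)*(c:R)*(c:R)*(e:R)*(e:R)) + (24218750*(c:R)*(c:R)*(c:R)*(e:R)*(e:R)*(e:R)) + (11718750*(c:R)*(c:R)*(c:R)*(e:R)*(e:R)*(e:R)*(e:R)) + (1562500*(c:R)*(c:R)*(c:R)*(e:R)*(e:R)*(e:R)*(e:R)*(e:R)) + (-1153750*(c:R)*(c:R)*(c:R)*(c:R))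 + (2156250*(c:R)*(c:R)*(c:R)*(c:R)*(e:R)) + (15625000*(c:R)*(c:R)*(c:R)*(c:R)*(e:R)*(e:R)) + (11718750*(c:R)*(c:R)*(c:R)*(c:R)*(e:R)*(e:R)*(e:R)) + (2343750*(c:R)*(c:R)*(c:R)*(c:R)*(e:R)*(e:R)*(e:R)*(e:R)) + (-893750*(c:R)*(c:R)*(c:R)*(c:R)*(c:R)) + (3312500*(c:R)*(c:R)*(c:R)*(c:R)*(c:R)*(e:R)) + (5468750*(c:R)*(c:R)*(c:R)*(c:R)*(c:R)*(e:R)*(e:R)) + (1562500*(c:R)*(c:R)*(c:R)*(c:R)*(c:R)*(e:R)*(e:R)*(e:R)) + (-203125*(c:R)*(c:R)*(c:R)*(c:R)*(c:R)*(c:R)) + (937500*(c:R)*(c:R)*(c:R)*(c:R)*(c:R)*(c:R)*(e:R)) + (390625*(c:R)*(c:R)*(c:R)*(c:R)*(c:R)*(c:R)*(e:R)*(e:R))) * hj + ((162*(((c+e).choose c) : R)) + (-1*((5*(c+e)+4).choose (5*c+2) : R)) + (-156*((5*(c+e)+2).choose (5*c+2) : R)) + (941*(e:R)*(((c+e).choose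 c) : R)) + (-3*(e:R)*((5*(c+e)+4).choose (5*c+2) : R)) + (265*(e:R)*((5*(c+e)+2).choose (5*c+2) : R)) + (-2197*(e:R)*(e:R)*(((c+e).choose c) : R)) + (-1*(e:R)*(e:R)*((5*(c+e)+4).choose (5*c+2) : R)) + (52*(e:R)*(e:R)*((5*(c+e)+3).choose (5*c+2) : R)) + (2075*(e:R)*(e:R)*((5*(c+e)+2).choose (5*c+2) : R)) + (-22100*(e:R)*(e:R)*(e:R)*(((c+e).choose c) : R)) + (85*(e:R)*(e:R)*(e:R)*((5*(c+e)+3).choose (5*c+2) : R)) + (2375*(e:R)*(e:R)*(e:R)*((5*(c+e)+2).choose (5*c+2) : R)) + (-46150*(e:R)*(e:R)*(e:R)*(e:R)*(((c+e).choose c) : R)) + (25*(e:R)*(e:R)*(e:R)*(e:R)*((5*(c+e)+3).choose (5*c+2) : R)) + (625*(e:R)*(e:R)*(e:R)*(e:R)*((5*(c+e)+2).choose (5*c+2) : R)) + (-35750*(e:R)*(e:R)*(e:R)*(e:R)*(e:R)*(((c+e).choose c) : R)) + (-8125*(e:R)*(e:R)*(e:R)*(e:R)*(e:R)*(e:R)*(((c+e).choose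 c) : R)) + (941*(c:R)*(((c+e).choose c) : R)) + (-923*(c:R)*((5*(c+e)+2).choose (5*c+2) : R)) + (-314*(c:R)*(e:R)*(((c+e).choose c) : R)) + (2245*(c:R)*(e:R)*((5*(c+e)+2).choose (5*c+2) : R)) + (-22360*(c:R)*(e:R)*(e:R)*(((c+e).choose c) : R)) + (65*(c:R)*(e:R)*(e:R)*((5*(c+e)+3).choose (5*c+2) : R)) + (10100*(c:R)*(e:R)*(e:R)*((5*(c+e)+2).choose (5*c+2) : R)) + (-20850*(c:R)*(e:R)*(e:R)*(e:R)*(((c+e).choose c) : R)) + (25*(c:R)*(e:R)*(e:R)*(e:R)*((5*(c+e)+3).choose (5*c+2) : R)) + (8375*(c:R)*(e:R)*(e:R)*(e:R)*((5*(c+e)+2).choose (5*c+2) : R)) + (86250*(c:R)*(e:R)*(e:R)*(e:R)*(e:R)*(((c+e).choose c) : R)) + (1875*(c:R)*(e:R)*(e:R)*(e:R)*(e:R)*((5*(c+e)+2).choose (5*c+2) : R)) + (132500*(c:R)*(e:R)*(e:R)*(e:R)*(e:R)*(e:R)*(((c+e).choose c) : R)) + (37500*(c:R)*(e:R)*(e:R)*(e:R)*(e:R)*(e:R)*(e:R)*(((c+e).choose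 c) : R)) + (-2197*(c:R)*(c:R)*(((c+e).choose c) : R)) + (-1846*(c:R)*(c:R)*((5*(c+e)+2).choose (5*c+2) : R)) + (4056*(c:R)*(c:R)*((5*(c+e)+1).choose (5*c+1) : R)) + (-22360*(c:R)*(c:R)*(e:R)*(((c+e).choose c) : R)) + (6115*(c:R)*(c:R)*(e:R)*((5*(c+e)+2).choose (5*c+2) : R)) + (3250*(c:R)*(c:R)*(e:R)*((5*(c+e)+1).choose (5*c+1) : R)) + (51200*(c:R)*(c:R)*(e:R)*(e:R)*(((c+e).choose c) : R)) + (14325*(c:R)*(c:R)*(e:R)*(e:R)*((5*(c+e)+2).choose (5*c+2) : R)) + (-71175*(c:R)*(c:R)*(e:R)*(e:R)*((5*(c+e)+1).choose (5*c+1) : R)) + (443750*(c:R)*(c:R)*(e:R)*(e:R)*(e:R)*(((c+e).choose c) : R)) + (6125*(c:R)*(c:R)*(e:R)*(e:R)*(e:R)*((5*(c+e)+2).choose (5*c+2) : R)) + (-196625*(c:R)*(c:R)*(e:R)*(e:R)*(e:R)*((5*(c+e)+1).choose (5*c+1) : R)) + (625000*(c:R)*(c:R)*(e:R)*(e:R)*(e:R)*(e:R)*(((c+e).choose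 c) : R)) + (625*(c:R)*(c:R)*(e:R)*(e:R)*(e:R)*(e:R)*((5*(c+e)+2).choose (5*c+2) : R)) + (-170625*(c:R)*(c:R)*(e:R)*(e:R)*(e:R)*(e:R)*((5*(c+e)+1).choose (5*c+1) : R)) + (218750*(c:R)*(c:R)*(e:R)*(e:R)*(e:R)*(e:R)*(e:R)*(((c+e).choose c) : R)) + (-40625*(c:R)*(c:R)*(e:R)*(e:R)*(e:R)*(e:R)*(e:R)*((5*(c+e)+1).choose (5*c+1) : R)) + (15625*(c:R)*(c:R)*(e:R)*(e:R)*(e:R)*(e:R)*(e:R)*(e:R)*(((c+e).choose c) : R)) + (-22100*(c:R)*(c:R)*(c:R)*(((c+e).choose c) : R)) + (-1430*(c:R)*(c:R)*(c:R)*((5*(c+e)+2).choose (5*c+2) : R)) + (23530*(c:R)*(c:R)*(c:R)*((5*(c+e)+1).choose (5*c+1) : R)) + (-20850*(c:R)*(c:R)*(c:R)*(e:R)*(((c+e).choose c) : R)) + (5950*(c:R)*(c:R)*(c:R)*(e:R)*((5*(c+e)+2).choose (5*c+2) : R)) + (-24100*(c:R)*(c:R)*(c:R)*(e:R)*((5*(c+e)+1).choose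 (5*c+1) : R)) + (443750*(c:R)*(c:R)*(c:R)*(e:R)*(e:R)*(((c+e).choose c) : R)) + (5750*(c:R)*(c:R)*(c:R)*(e:R)*(e:R)*((5*(c+e)+2).choose (5*c+2) : R)) + (-357250*(c:R)*(c:R)*(c:R)*(e:R)*(e:R)*((5*(c+e)+1).choose (5*c+1) : R)) + (968750*(c:R)*(c:R)*(c:R)*(e:R)*(e:R)*(e:R)*(((c+e).choose c) : R)) + (1250*(c:R)*(c:R)*(c:R)*(e:R)*(e:R)*(e:R)*((5*(c+e)+2).choose (5*c+2) : R)) + (-514375*(c:R)*(c:R)*(c:R)*(e:R)*(e:R)*(e:R)*((5*(c+e)+1).choose (5*c+1) : R)) + (468750*(c:R)*(c:R)*(c:R)*(e:R)*(e:R)*(e:R)*(e:R)*(((c+e).choose c) : R)) + (-187500*(c:R)*(c:R)*(c:R)*(e:R)*(e:R)*(e:R)*(e:R)*((5*(c+e)+1).choose (5*c+1) : R)) + (62500*(c:R)*(c:R)*(c:R)*(e:R)*(e:R)*(e:R)*(e:R)*(e:R)*(((c+e).choose c) : R)) + (-15625*(c:R)*(c:R)*(c:R)*(e:R)*(e:R)*(e:R)*(e:R)*(e:R)*((5*(c+e)+1).choose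 (5*c+1) : R)) + (-46150*(c:R)*(c:R)*(c:R)*(c:R)*(((c+e).choose c) : R)) + (-325*(c:R)*(c:R)*(c:R)*(c:R)*((5*(c+e)+2).choose (5*c+2) : R)) + (46475*(c:R)*(c:R)*(c:R)*(c:R)*((5*(c+e)+1).choose (5*c+1) : R)) + (86250*(c:R)*(c:R)*(c:R)*(c:R)*(e:R)*(((c+e).choose c) : R)) + (1500*(c:R)*(c:R)*(c:R)*(c:R)*(e:R)*((5*(c+e)+2).choose (5*c+2) : R)) + (-121875*(c:R)*(c:R)*(c:R)*(c:R)*(e:R)*((5*(c+e)+1).choose (5*c+1) : R)) + (625000*(c:R)*(c:R)*(c:R)*(c:R)*(e:R)*(e:R)*(((c+e).choose c) : R)) + (625*(c:R)*(c:R)*(c:R)*(c:R)*(e:R)*(e:R)*((5*(c+e)+2).choose (5*c+2) : R)) + (-492500*(c:R)*(c:R)*(c:R)*(c:R)*(e:R)*(e:R)*((5*(c+e)+1).choose (5*c+1) : R)) + (468750*(c:R)*(c:R)*(c:R)*(c:R)*(e:R)*(e:R)*(e:R)*(((c+e).choose c) : R)) + (-290625*(c:R)*(c:R)*(c:R)*(c:R)*(e:R)*(e:R)*(e:R)*((5*(c+e)+1).choose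 (5*c+1) : R)) + (93750*(c:R)*(c:R)*(c:R)*(c:R)*(e:R)*(e:R)*(e:R)*(e:R)*(((c+e).choose c) : R)) + (-46875*(c:R)*(c:R)*(c:R)*(c:R)*(e:R)*(e:R)*(e:R)*(e:R)*((5*(c+e)+1).choose (5*c+1) : R)) + (-35750*(c:R)*(c:R)*(c:R)*(c:R)*(c:R)*(((c+e).choose c) : R)) + (35750*(c:R)*(c:R)*(c:R)*(c:R)*(c:R)*((5*(c+e)+1).choose (5*c+1) : R)) + (132500*(c:R)*(c:R)*(c:R)*(c:R)*(c:R)*(e:R)*(((c+e).choose c) : R)) + (-140625*(c:R)*(c:R)*(c:R)*(c:R)*(c:R)*(e:R)*((5*(c+e)+1).choose (5*c+1) : R)) + (218750*(c:R)*(c:R)*(c:R)*(c:R)*(c:R)*(e:R)*(e:R)*(((c+e).choose c) : R)) + (-181250*(c:R)*(c:R)*(c:R)*(c:R)*(c:R)*(e:R)*(e:R)*((5*(c+e)+1).choose (5*c+1) : R)) + (62500*(c:R)*(c:R)*(c:R)*(c:R)*(c:R)*(e:R)*(e:R)*(e:R)*(((c+e).choose c) : R)) + (-46875*(c:R)*(c:R)*(c:R)*(c:R)*(c:R)*(e:R)*(e:R)*(e:R)*((5*(c+e)+1).choose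 (5*c+1) : R)) + (-8125*(c:R)*(c:R)*(c:R)*(c:R)*(c:R)*(c:R)*(((c+e).choose c) : R)) + (8125*(c:R)*(c:R)*(c:R)*(c:R)*(c:R)*(c:R)*((5*(c+e)+1).choose (5*c+1) : R)) + (37500*(c:R)*(c:R)*(c:R)*(c:R)*(c:R)*(c:R)*(e:R)*(((c+e).choose c) : R)) + (-37500*(c:R)*(c:R)*(c:R)*(c:R)*(c:R)*(c:R)*(e:R)*((5*(c+e)+1).choose (5*c+1) : R)) + (15625*(c:R)*(c:R)*(c:R)*(c:R)*(c:R)*(c:R)*(e:R)*(e:R)*(((c+e).choose c) : R)) + (-15625*(c:R)*(c:R)*(c:R)*(c:R)*(c:R)*(c:R)*(e:R)*(e:R)*((5*(c+e)+1).choose (5*c+1) : R))) * h25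


lemma sum_blocks (M : ℕ) (f : ℕ → R) : ∑ k ∈ Finset.range (5*M), f k
    = ∑ j ∈ Finset.range M, (f (5*j) + (f (5*j+1) + (f (5*j+2) + (f (5*j+3) + f (5*j+4))))) := by
  induction M with
  | zero => simp
  | succ M ih =>
    rw [show 5*(M+1) = 5*M+1+1+1+1+1 by ring, Finset.sum_range_succ, Finset.sum_range_succ,
      Finset.sum_range_succ, Finset.sum_range_succ, Finset.sum_range_succ, ih, Finset.sum_range_succ,
      show 5*M+1+1 = 5*M+2 by omega, show 5*M+1+1+1 = 5*M+3 by omega, show 5*M+1+1+1+1 = 5*M+4 by omega]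
    ring

lemma case0 (m : ℕ) : ((apery (5*m) : ℕ) : R) = ((apery m : ℕ) : R) := by
  unfold apery
  push_cast
  rw [Finset.sum_subset (Finset.range_subset_range.mpr (show 5*m+1 ≤ 5*(m+1) by omega))
    (fun k hk hk' => by
      simp only [Finset.mem_range] at hk hk'
      rw [Nat.choose_eq_zero_of_lt (show 5*m < k by omega)]
      push_cast; ring)]
  rw [sum_blocks]
  refine Finset.sum_congr rfl fun j hj => ?_
  simp only [Finset.mem_range] at hj
  obtain ⟨e, rfl⟩ : ∃ e, m = j + e := ⟨m - j, by omega⟩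
  rw [sq0 (five_dvd_choose (show (5*(j+e)) % 5 < (5*j+1) % 5 by omega)), zero_mul]
  rw [sq0 (five_dvd_choose (show (5*(j+e)) % 5 < (5*j+2) % 5 by omega)), zero_mul]
  rw [sq0 (five_dvd_choose (show (5*(j+e)) % 5 < (5*j+3) % 5 by omega)), zero_mul]
  rw [sq0 (five_dvd_choose (show (5*(j+e)) % 5 < (5*j+4) % 5 by omega)), zero_mul]
  rw [show 5*(j+e)+5*j = 5*(j+(e+j)) by ring, jac (j+e) j, jac (j+(e+j)) j,
    show j+e+j = j+(e+j) by ring]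
  ring

lemma case4 (m : ℕ) : ((apery (5*m+4) : ℕ) : R) = ((apery m : ℕ) : R) := by
  unfold apery
  push_cast
  rw [show 5*m+4+1 = 5*(m+1) by ring, sum_blocks]
  refine Finset.sum_congr rfl fun j hj => ?_
  simp only [Finset.mem_range] at hj
  obtain ⟨e, rfl⟩ : ∃ e, m = j + e := ⟨m - j, by omega⟩
  rw [sq0 (five_dvd_choose (show (5*(j+e)+4+(5*j+1)) % 5 < (5*j+1) % 5 by omega)), mul_zero]
  rw [sq0 (five_dvd_choose (show (5*(j+e)+4+(5*j+2)) % 5 < (5*j+2) % 5 by omega)), mul_zero]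
  rw [sq0 (five_dvd_choose (show (5*(j+e)+4+(5*j+3)) % 5 < (5*j+3) % 5 by omega)), mul_zero]
  rw [sq0 (five_dvd_choose (show (5*(j+e)+4+(5*j+4)) % 5 < (5*j+4) % 5 by omega)), mul_zero]
  rw [show 5*(j+e)+4+5*j = 5*(j+(e+j))+4 by ring, X40 j e, X40 j (e+j),
    show j+e+j = j+(e+j) by ring]
  ring

lemma case2 (m : ℕ) : ((apery (5*m+2) : ℕ) : R) = 23 * ((apery m : ℕ) : R) := by
  unfold apery
  push_cast
  rw [Finset.sum_subset (Finset.range_subset_range.mpr (show 5*m+2+1 ≤ 5*(m+1) by omega))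
    (fun k hk hk' => by
      simp only [Finset.mem_range] at hk hk'
      rw [Nat.choose_eq_zero_of_lt (show 5*m+2 < k by omega)]
      push_cast; ring)]
  rw [sum_blocks, Finset.mul_sum]
  refine Finset.sum_congr rfl fun j hj => ?_
  simp only [Finset.mem_range] at hj
  obtain ⟨e, rfl⟩ : ∃ e, m = j + e := ⟨m - j, by omega⟩
  rw [sq0 (five_dvd_choose (show (5*(j+e)+2) % 5 < (5*j+3) % 5 by omega)), zero_mul]
  rw [sq0 (five_dvd_choose (show (5*(j+e)+2) % 5 < (5*j+4) % 5 by omega)), zero_mul]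
  rw [show 5*(j+e)+2+5*j = 5*(j+(e+j))+2 by ring,
    show 5*(j+e)+2+(5*j+1) = 5*(j+(e+j))+3 by ring,
    show 5*(j+e)+2+(5*j+2) = 5*(j+(e+j))+4 by ring,
    X20 j e, X21 j e, X22 j e, X20 j (e+j), X31 j (e+j), X42 j (e+j),
    show j+e+j = j+(e+j) by ring]
  push_cast
  linear_combination ((2*(((j+e).choose j : ℕ) : R)*(((j+e).choose j : ℕ) : R)*(((j+(e+j)).choose j : ℕ) : R)*(((j+(e+j)).choose j : ℕ) : R)) + (72*(e:R)*(((j+e).choose j : ℕ) : R)*(((j+e).choose j : ℕ) : R)*(((j+(e+j)).choose j : ℕ) : R)*(((j+(e+j)).choose j : ℕ) : R)) + (710*(e:R)*(e:R)*(((j+e).choose j : ℕ) : R)*(((j+e).choose j : ℕ) : R)*(((j+(e+j)).choose j : ℕ) : R)*(((j+(e+j)).choose j : ℕ) : R)) + (1050*(e:R)*(e:R)*(e:R)*(((j+e).choose j : ℕ) : R)*(((j+e).choose j : ℕ) : R)*(((j+(e+j)).choose j : ℕ) : R)*(((j+(e+j)).choose j : ℕ) : R)) + (425*(e:R)*(e:R)*(e:R)*(e:R)*(((j+e).choose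 j : ℕ) : R)*(((j+e).choose j : ℕ) : R)*(((j+(e+j)).choose j : ℕ) : R)*(((j+(e+j)).choose j : ℕ) : R)) + (20*(j:R)*(((j+e).choose j : ℕ) : R)*(((j+e).choose j : ℕ) : R)*(((j+(e+j)).choose j : ℕ) : R)*(((j+(e+j)).choose j : ℕ) : R)) + (270*(j:R)*(e:R)*(((j+e).choose j : ℕ) : R)*(((j+e).choose j : ℕ) : R)*(((j+(e+j)).choose j : ℕ) : R)*(((j+(e+j)).choose j : ℕ) : R)) + (2230*(j:R)*(e:R)*(e:R)*(((j+e).choose j : ℕ) : R)*(((j+e).choose j : ℕ) : R)*(((j+(e+j)).choose j : ℕ) : R)*(((j+(e+j)).choose j : ℕ) : R)) + (1700*(j:R)*(e:R)*(e:R)*(e:R)*(((j+e).choose j : ℕ) : R)*(((j+e).choose j : ℕ) : R)*(((j+(e+j)).choose j : ℕ) : R)*(((j+(e+j)).choose j : ℕ) : R)) + (137*(j:R)*(j:R)*(((j+e).choose j : ℕ) : R)*(((j+e).choose j : ℕ) : R)*(((j+(e+j)).choose j : ℕ) : R)*(((j+(e+j)).choose j : ℕ) : R)) + (310*(j:R)*(j:R)*(e:R)*(((j+e).choose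 j : ℕ) : R)*(((j+e).choose j : ℕ) : R)*(((j+(e+j)).choose j : ℕ) : R)*(((j+(e+j)).choose j : ℕ) : R)) + (1750*(j:R)*(j:R)*(e:R)*(e:R)*(((j+e).choose j : ℕ) : R)*(((j+e).choose j : ℕ) : R)*(((j+(e+j)).choose j : ℕ) : R)*(((j+(e+j)).choose j : ℕ) : R)) + (1330*(j:R)*(j:R)*(j:R)*(((j+e).choose j : ℕ) : R)*(((j+e).choose j : ℕ) : R)*(((j+(e+j)).choose j : ℕ) : R)*(((j+(e+j)).choose j : ℕ) : R)) + (100*(j:R)*(j:R)*(j:R)*(e:R)*(((j+e).choose j : ℕ) : R)*(((j+e).choose j : ℕ) : R)*(((j+(e+j)).choose j : ℕ) : R)*(((j+(e+j)).choose j : ℕ) : R)) + (6425*(j:R)*(j:R)*(j:R)*(j:R)*(((j+e).choose j : ℕ) : R)*(((j+e).choose j : ℕ) : R)*(((j+(e+j)).choose j : ℕ) : R)*(((j+(e+j)).choose j : ℕ) : R))) * h25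

theorem apery_base_five_digits (n : ℕ)
    (hdig : ∀ e ∈ Nat.digits 5 n, e = 0 ∨ e = 2 ∨ e = 4) :
    apery n ≡ 23 ^ ((Nat.digits 5 n).count 2) [MOD 25] := by
  induction n using Nat.strong_induction_on with
  | _ n ih =>
    rcases Nat.eq_zero_or_pos n with rfl | hn
    · have h1 : apery 0 = 1 := by simp [apery]
      rw [h1]
      simpa using Nat.ModEq.refl 1
    · have hd : Nat.digits 5 n = n % 5 :: Nat.digits 5 (n / 5) := Nat.digits_def' (by norm_num) hn
      have hr : n % 5 = 0 ∨ n % 5 = 2 ∨ n % 5 = 4 := hdig _ (by rw [hd]; exact List.mem_cons_self)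
      have htail : ∀ e ∈ Nat.digits 5 (n / 5), e = 0 ∨ e = 2 ∨ e = 4 :=
        fun e he => hdig e (by rw [hd]; exact List.mem_cons_of_mem _ he)
      have IH := ih (n / 5) (Nat.div_lt_self hn (by norm_num)) htail
      rw [← ZMod.natCast_eq_natCast_iff] at IH ⊢
      rw [hd]
      push_cast at IH ⊢
      set m := n / 5 with hm
      rcases hr with h | h | h
      · rw [h, show n = 5*m by omega, case0, IH, List.count_cons]
        norm_num
      · rw [h, show n = 5*m+2 by omega, case2, IH, List.count_cons]
        norm_num
        ring
      · rw [h, show n = 5*m+4 by omega, case4, IH, List.count_cons]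
        norm_num
end

section
/- For every prime p ≥ 5, A(p−1) ≡ 1 (mod p^3), where A denotes the Apéry numbers. -/
lemma choose_pred_cast (p : ℕ) (hp : p.Prime) :
    ∀ k, k ≤ p - 1 → (((p-1).choose k : ℕ) : ZMod p) = (-1)^k := by
  intro k
  induction k with
  | zero => simp
  | succ k ih =>
    intro hk
    have hk' : k ≤ p - 1 := by omega
    have h1 : p.choose (k+1) = (p-1).choose k + (p-1).choose (k+1) := by
      have h : p - 1 + 1 = p := by have := hp.two_le; omega
      conv_lhs => rw [← h]
      rw [Nat.choose_succ_succ]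
    have h2 : p ∣ p.choose (k+1) :=
      hp.dvd_choose_self (Nat.succ_ne_zero k) (by have := hp.two_le; omega)
    have h3 : ((p.choose (k+1) : ℕ) : ZMod p) = 0 :=
      (ZMod.natCast_eq_zero_iff _ _).2 h2
    rw [h1] at h3
    push_cast at h3
    rw [ih hk'] at h3
    have : (((p-1).choose (k+1) : ℕ) : ZMod p) = -(-1)^k := by linear_combination h3
    rw [this, pow_succ]
    ring

lemma choose_add_cast (p : ℕ) (hp : p.Prime) :
    ∀ j, j < p - 1 → (((p+j).choose j : ℕ) : ZMod p) = 1 := by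
  intro j
  induction j with
  | zero => simp
  | succ j ih =>
    intro hj
    have hj' : j < p - 1 := by omega
    have key : (p+j).choose (j+1) * (j+1) = (p+j).choose j * p := by
      simpa using Nat.choose_succ_right_eq (p+j) j
    have hdvd : p ∣ (p+j).choose (j+1) := by
      have h1 : p ∣ (p+j).choose (j+1) * (j+1) := by
        rw [key]; exact Dvd.intro_left _ rfl
      rcases (Nat.Prime.dvd_mul hp).1 h1 with h | h
      · exact h
      · exact absurd (Nat.le_of_dvd (by omega) h) (by omega)
    have h1 : (p+(j+1)).choose (j+1) = (p+j).choose j + (p+j).choose (j+1) := by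
      rw [show p + (j+1) = (p+j) + 1 by ring, Nat.choose_succ_succ]
    rw [h1]
    push_cast
    rw [ih hj', (ZMod.natCast_eq_zero_iff _ _).2 hdvd]
    ring

theorem apery_pred_prime_mod_p_cubed (p : ℕ) (hp : p.Prime) (hp5 : 5 ≤ p) :
    apery (p - 1) ≡ 1 [MOD p ^ 3] := by
  haveI : Fact p.Prime := ⟨hp⟩
  have hp1 : p - 1 + 1 = p := by omega
  set t : ℕ → ℕ := fun j => ((p-1).choose (j+1))^2 * ((p+j).choose (j+1))^2 with ht
  -- step 1: split off the k = 0 term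
  have hapery : apery (p-1) = (∑ j ∈ Finset.range (p-1), t j) + 1 := by
    unfold apery
    rw [Finset.sum_range_succ']
    congr 1
    · apply Finset.sum_congr rfl
      intro j _
      rw [show p - 1 + (j+1) = p + j by omega]
    · simp
  -- step 2: per-term structure
  have hstep : ∀ j < p - 1, t j = p^2 * (t j / p^2) ∧
      (j+1)^2 * (t j / p^2) = ((p-1).choose (j+1) * (p+j).choose j)^2 := by
    intro j hj
    have key : (p+j).choose (j+1) * (j+1) = (p+j).choose j * p := by
      simpa using Nat.choose_succ_right_eq (p+j) j
    have hsq : (j+1)^2 * t j = p^2 * ((p-1).choose (j+1) * (p+j).choose j)^2 := by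
      calc (j+1)^2 * t j
          = ((p-1).choose (j+1))^2 * ((p+j).choose (j+1) * (j+1))^2 := by rw [ht]; ring
        _ = ((p-1).choose (j+1))^2 * ((p+j).choose j * p)^2 := by rw [key]
        _ = p^2 * ((p-1).choose (j+1) * (p+j).choose j)^2 := by ring
    have hcop : Nat.Coprime (p^2) ((j+1)^2) := by
      apply Nat.Coprime.pow
      exact (Nat.Prime.coprime_iff_not_dvd hp).2 fun h =>
        absurd (Nat.le_of_dvd (by omega) h) (by omega)
    have hdvd : p^2 ∣ t j := by
      apply hcop.dvd_of_dvd_mul_left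
      exact ⟨((p-1).choose (j+1) * (p+j).choose j)^2, by linarith [hsq]⟩
    have hts : t j = p^2 * (t j / p^2) := (Nat.mul_div_cancel' hdvd).symm
    refine ⟨hts, ?_⟩
    have hpos : 0 < p^2 := by positivity
    apply Nat.eq_of_mul_eq_mul_left hpos
    calc p^2 * ((j+1)^2 * (t j / p^2)) = (j+1)^2 * (p^2 * (t j / p^2)) := by ring
      _ = (j+1)^2 * t j := by rw [← hts]
      _ = p^2 * ((p-1).choose (j+1) * (p+j).choose j)^2 := hsq
  -- step 3: sum = p^2 * (sum of s)
  have hsum : ∑ j ∈ Finset.range (p-1), t j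
      = p^2 * ∑ j ∈ Finset.range (p-1), (t j / p^2) := by
    rw [Finset.mul_sum]
    exact Finset.sum_congr rfl fun j hj => (hstep j (Finset.mem_range.1 hj)).1
  -- step 4: p divides sum of s, via ZMod p
  have hdvdsum : p ∣ ∑ j ∈ Finset.range (p-1), (t j / p^2) := by
    rw [← ZMod.natCast_eq_zero_iff]
    push_cast
    have hterm : ∀ j ∈ Finset.range (p-1),
        ((t j / p^2 : ℕ) : ZMod p) = (((j+1 : ℕ) : ZMod p)⁻¹)^2 := by
      intro j hj
      have hj' : j < p - 1 := Finset.mem_range.1 hj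
      have h1 := (hstep j hj').2
      have h2 : (((j+1)^2 * (t j / p^2) : ℕ) : ZMod p)
          = ((((p-1).choose (j+1) * (p+j).choose j)^2 : ℕ) : ZMod p) := by rw [h1]
      push_cast at h2
      rw [choose_pred_cast p hp (j+1) (by omega), choose_add_cast p hp j hj'] at h2
      have hval : ((-1 : ZMod p)^(j+1) * 1)^2 = 1 := by
        rw [mul_one, ← pow_mul, mul_comm, pow_mul, neg_one_sq, one_pow]
      rw [hval] at h2
      have h4 : ((t j / p^2 : ℕ) : ZMod p) = ((((j:ZMod p)+1))^2)⁻¹ :=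
        eq_inv_of_mul_eq_one_right h2
      rw [inv_pow]
      push_cast
      exact h4
    rw [Finset.sum_congr rfl hterm]
    have h5 : ∑ j ∈ Finset.range p, (((j : ℕ) : ZMod p)⁻¹)^2 = ∑ x : ZMod p, (x⁻¹)^2 := by
      apply Finset.sum_nbij' (i := fun (j : ℕ) => ((j : ZMod p)))
        (j := fun x : ZMod p => x.val)
      · intro a _; exact Finset.mem_univ _
      · intro x _; exact Finset.mem_range.2 (ZMod.val_lt x)
      · intro a ha; exact ZMod.val_natCast_of_lt (Finset.mem_range.1 ha)
      · intro x _; simp [ZMod.natCast_val, ZMod.cast_id]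
      · intro a _; rfl
    have h6 : ∑ j ∈ Finset.range p, (((j : ℕ) : ZMod p)⁻¹)^2
        = (∑ j ∈ Finset.range (p-1), ((((j+1 : ℕ)) : ZMod p)⁻¹)^2) + (((0:ℕ) : ZMod p)⁻¹)^2 := by
      rw [show Finset.range p = Finset.range (p-1+1) by rw [hp1], Finset.sum_range_succ']
    have h7 : ∑ x : ZMod p, (x:ZMod p)^2 = ∑ x : ZMod p, (x⁻¹)^2 :=
      Fintype.sum_bijective (fun x => x⁻¹) inv_involutive.bijective _ _
        (fun x => by rw [inv_inv])
    have h8 : ∑ x : ZMod p, (x:ZMod p)^2 = 0 := by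
      apply FiniteField.sum_pow_lt_card_sub_one
      rw [ZMod.card]; omega
    have h0 : (((0:ℕ) : ZMod p)⁻¹)^2 = 0 := by simp
    rw [h0, add_zero] at h6
    rw [← h6, h5, ← h7, h8]
  -- step 5: conclude
  obtain ⟨m, hm⟩ := hdvdsum
  have hfinal : apery (p-1) = 1 + p^3 * m := by
    rw [hapery, hsum, hm]; ring
  rw [hfinal]
  exact ((Nat.modEq_iff_dvd' (Nat.le_add_right 1 _)).2 ⟨m, by omega⟩).symm
end
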